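/- For every \vec k : Fin n → ZMod d, the GHZ-type resource state obtained by inverse Fourier transforming |Max_{\vec k}⟩ = F_s e_{\vec k} is |GHZ_{\vec k}⟩ = (F ⊗ ⋯ ⊗ F)⁻¹ F_s e_{\vec k} = ζ^{-|\vec k|²} · d^{-1/2} · ∑_{s ∈ ZMod d} q^{-s|\vec k|} e_{(k₁+s,\, k₁+k₂+s,\, …,\, |\vec k|+s)}. -/

import Mathlib

/-- The 1-qudit Fourier matrix `F`, with `F e_k = d^{-1/2} ∑_ℓ q^{kℓ} e_ℓ`. -/
noncomputable def Fmat (d : ℕ) (q : ℂ) : Matrix (ZMod d) (ZMod d) ℂ :=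
  Matrix.of fun l k => (Real.sqrt d : ℂ)⁻¹ * q ^ (k.val * l.val)

/-- The `n`-fold tensor (Kronecker) power `F ⊗ ⋯ ⊗ F` acting on the `n`-qudit space. -/
noncomputable def tensF (d n : ℕ) (q : ℂ) :
    Matrix (Fin n → ZMod d) (Fin n → ZMod d) ℂ :=
  Matrix.of fun l k => ∏ j, Fmat d q (l j) (k j)

/-- The string Fourier transform `F_s` on `n`-qudits: its `(ℓ, k)` entry equals
`d^{(1-n)/2} · ζ^{|ℓ|²} · ∏_{j₁ < j₂} q^{-ℓ_{j₁} k_{j₂}}` if `|ℓ| = |k|`, and `0` otherwise. -/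
noncomputable def SFT (d n : ℕ) (q ζ : ℂ) :
    Matrix (Fin n → ZMod d) (Fin n → ZMod d) ℂ :=
  Matrix.of fun l k =>
    if (∑ j, l j) = (∑ j, k j) then
      (Real.sqrt d : ℂ) ^ (1 - (n : ℤ)) * ζ ^ (∑ j, l j).val ^ 2 *
        ∏ p ∈ Finset.univ.filter (fun p : Fin n × Fin n => p.1 < p.2),
          q ^ (-(((l p.1).val * (k p.2).val : ℕ) : ℤ))
    else 0

/-- The product basis vector `e_{\vec k}` of the `n`-qudit space. -/
noncomputable def ket (d n : ℕ) (k : Fin n → ZMod d) : (Fin n → ZMod d) → ℂ :=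
  fun m => if m = k then 1 else 0

lemma qz {d : ℕ} [NeZero d] {q : ℂ} (hq0 : q ≠ 0) (hqd : q ^ d = 1) {a b : ℤ}
    (h : (a : ZMod d) = (b : ZMod d)) : q ^ a = q ^ b := by
  have hd : (d : ℤ) ∣ (b - a) := by
    have : ((b - a : ℤ) : ZMod d) = 0 := by push_cast [h]; ring
    exact (ZMod.intCast_zmod_eq_zero_iff_dvd _ _).1 this
  obtain ⟨m, hm⟩ := hd
  have hb : b = a + d * m := by linarith
  rw [hb, zpow_add₀ hq0, zpow_mul, zpow_natCast, hqd, one_zpow, mul_one]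

lemma charSum {d : ℕ} [NeZero d] {q : ℂ}
    (hq : q = Complex.exp (2 * Real.pi * Complex.I / d)) (t : ZMod d) :
    ∑ s : ZMod d, q ^ (((s * t).val : ℕ) : ℤ) = if t = 0 then (d : ℂ) else 0 := by
  have hprim : IsPrimitiveRoot q d := by
    rw [hq]; exact Complex.isPrimitiveRoot_exp d (NeZero.ne d)
  have hq0 : q ≠ 0 := by
    rw [hq]; exact Complex.exp_ne_zero _
  have hqd : q ^ d = 1 := hprim.pow_eq_one
  have hterm : ∀ s : ZMod d, q ^ (((s * t).val : ℕ) : ℤ) = (q ^ t.val) ^ s.val := by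
    intro s
    have h1 : q ^ (((s * t).val : ℕ) : ℤ) = q ^ ((t.val * s.val : ℕ) : ℤ) := by
      refine qz hq0 hqd ?_
      push_cast [ZMod.natCast_val, ZMod.cast_id]
      ring
    rw [h1, zpow_natCast, pow_mul]
  simp_rw [hterm]
  have hre : ∑ s : ZMod d, (q ^ t.val) ^ s.val = ∑ i ∈ Finset.range d, (q ^ t.val) ^ i := by
    refine Finset.sum_nbij' (fun s => s.val) (fun i => (i : ZMod d)) ?_ ?_ ?_ ?_ ?_
    · intro a _; exact Finset.mem_range.2 (ZMod.val_lt a)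
    · intro a _; exact Finset.mem_univ _
    · intro a _; simp [ZMod.natCast_val, ZMod.cast_id]
    · intro a ha; exact ZMod.val_natCast_of_lt (Finset.mem_range.1 ha)
    · intro a _; rfl
  rw [hre]
  by_cases ht : t = 0
  · simp [ht, NeZero.ne d]
  · have hw : q ^ t.val ≠ 1 := by
      refine hprim.pow_ne_one_of_pos_of_lt ?_ (ZMod.val_lt t)
      exact (fun h => ht ((ZMod.val_eq_zero t).1 h))
    rw [geom_sum_eq hw, if_neg ht]
    have : (q ^ t.val) ^ d = 1 := by
      rw [← pow_mul, mul_comm, pow_mul, hqd, one_pow]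
    rw [this, sub_self, zero_div]

lemma keysum {d n : ℕ} [NeZero d] (k l : Fin n → ZMod d) :
    (∑ j, (∑ i ∈ Finset.Iic j, k i) * l j)
      + (∑ p ∈ Finset.univ.filter (fun p : Fin n × Fin n => p.1 < p.2), l p.1 * k p.2)
      = (∑ i, k i) * (∑ j, l j) := by
  have h1 : ∀ j, (∑ i ∈ Finset.Iic j, k i) * l j = ∑ i, if i ≤ j then k i * l j else 0 := by
    intro j
    rw [Finset.sum_mul, show Finset.Iic j = Finset.univ.filter (· ≤ j) by ext; simp,
      Finset.sum_filter]
  simp_rw [h1]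
  rw [Finset.sum_filter, Fintype.sum_prod_type, mul_comm, Finset.sum_mul_sum,
    ← Finset.sum_add_distrib]
  refine Finset.sum_congr rfl fun x _ => ?_
  rw [← Finset.sum_add_distrib]
  refine Finset.sum_congr rfl fun y _ => ?_
  by_cases h : y ≤ x
  · rw [if_pos h, if_neg (not_lt.2 h), add_zero, mul_comm]
  · rw [if_neg h, if_pos (not_le.1 h), zero_add]

lemma leftinv {d n : ℕ} [NeZero d] {q : ℂ}
    (hq : q = Complex.exp (2 * Real.pi * Complex.I / d)) :
    (Matrix.of fun l m : Fin n → ZMod d =>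
        ((Real.sqrt d : ℂ))⁻¹ ^ n * ∏ j, q ^ ((((-(l j)) * (m j)).val : ℕ) : ℤ))
      * tensF d n q = 1 := by
  have hprim : IsPrimitiveRoot q d := by
    rw [hq]; exact Complex.isPrimitiveRoot_exp d (NeZero.ne d)
  have hq0 : q ≠ 0 := by rw [hq]; exact Complex.exp_ne_zero _
  have hqd : q ^ d = 1 := hprim.pow_eq_one
  have hd0 : (0:ℝ) < d := Nat.cast_pos.mpr (NeZero.pos d)
  have hsd : (Real.sqrt d : ℂ) * (Real.sqrt d : ℂ) = (d : ℂ) := by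
    rw [← Complex.ofReal_mul, Real.mul_self_sqrt hd0.le]
    exact Complex.ofReal_natCast d
  ext l l'
  rw [Matrix.mul_apply, Matrix.one_apply]
  simp only [Matrix.of_apply, tensF, Fmat]
  have hstep : ∀ m : Fin n → ZMod d,
      ((Real.sqrt d : ℂ)⁻¹ ^ n * ∏ j, q ^ ((((-(l j)) * (m j)).val : ℕ) : ℤ)) *
        ∏ j, ((Real.sqrt d : ℂ)⁻¹ * q ^ ((l' j).val * (m j).val))
      = (Real.sqrt d : ℂ)⁻¹ ^ n * (Real.sqrt d : ℂ)⁻¹ ^ n *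
          ∏ j, q ^ ((((l' j - l j) * (m j)).val : ℕ) : ℤ) := by
    intro m
    rw [Finset.prod_mul_distrib, Finset.prod_const, Finset.card_univ, Fintype.card_fin]
    have hcomb : ∀ j, q ^ ((((-(l j)) * (m j)).val : ℕ) : ℤ) * q ^ ((l' j).val * (m j).val)
        = q ^ ((((l' j - l j) * (m j)).val : ℕ) : ℤ) := by
      intro j
      rw [← zpow_natCast q ((l' j).val * (m j).val), ← zpow_add₀ hq0]
      refine qz hq0 hqd ?_
      push_cast [ZMod.natCast_val, ZMod.cast_id]
      ring
    rw [mul_mul_mul_comm, ← Finset.prod_mul_distrib]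
    simp_rw [hcomb]
  simp_rw [hstep]
  rw [← Finset.mul_sum]
  have hswap : ∑ m : Fin n → ZMod d, ∏ j, q ^ ((((l' j - l j) * (m j)).val : ℕ) : ℤ)
      = ∏ j, ∑ s : ZMod d, q ^ ((((l' j - l j) * s).val : ℕ) : ℤ) := by
    rw [Finset.prod_univ_sum]
    rw [Fintype.piFinset_univ]
  rw [hswap]
  have hinner : ∀ j, ∑ s : ZMod d, q ^ ((((l' j - l j) * s).val : ℕ) : ℤ)
      = if l' j - l j = 0 then (d:ℂ) else 0 := by
    intro j
    rw [← charSum hq (l' j - l j)]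
    exact Finset.sum_congr rfl fun s _ => by rw [mul_comm]
  simp_rw [hinner]
  by_cases hll : l = l'
  · subst hll
    simp only [sub_self, eq_self_iff_true, if_true, Finset.prod_const, Finset.card_univ,
      Fintype.card_fin]
    rw [← mul_pow, ← mul_pow]
    have hsd0 : (Real.sqrt d : ℂ) ≠ 0 :=
      Complex.ofReal_ne_zero.mpr (Real.sqrt_ne_zero'.mpr hd0)
    have h1 : (Real.sqrt d : ℂ)⁻¹ * (Real.sqrt d : ℂ)⁻¹ * (d:ℂ) = 1 := by
      rw [← hsd]; field_simp
    rw [h1, one_pow]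
  · obtain ⟨j, hj⟩ : ∃ j, l j ≠ l' j := by
      by_contra h
      push_neg at h
      exact hll (funext h)
    have hz : (if l' j - l j = 0 then (d:ℂ) else 0) = 0 := if_neg (sub_ne_zero.2 (Ne.symm hj))
    rw [Finset.prod_eq_zero (Finset.mem_univ j) hz, if_neg hll, mul_zero]

theorem stmt_13 (d n : ℕ) [NeZero d] (hn : 1 ≤ n) (q ζ : ℂ)
    (hq : q = Complex.exp (2 * Real.pi * Complex.I / d))
    (hζ2 : ζ ^ 2 = q) (hζd : ζ ^ d ^ 2 = 1) (k : Fin n → ZMod d) :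
    ((tensF d n q)⁻¹ * SFT d n q ζ).mulVec (ket d n k)
      = ζ ^ (-(((∑ j, k j).val ^ 2 : ℕ) : ℤ)) •
          (Real.sqrt d : ℂ)⁻¹ •
            ∑ s : ZMod d,
              q ^ (-((s.val * (∑ j, k j).val : ℕ) : ℤ)) •
                ket d n (fun j => (∑ i ∈ Finset.Iic j, k i) + s) := by
  have hprim : IsPrimitiveRoot q d := by
    rw [hq]; exact Complex.isPrimitiveRoot_exp d (NeZero.ne d)
  have hq0 : q ≠ 0 := by rw [hq]; exact Complex.exp_ne_zero _
  have hqd : q ^ d = 1 := hprim.pow_eq_one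
  have hd0 : (0:ℝ) < d := Nat.cast_pos.mpr (NeZero.pos d)
  have hsd : (Real.sqrt d : ℂ) * (Real.sqrt d : ℂ) = (d : ℂ) := by
    rw [← Complex.ofReal_mul, Real.mul_self_sqrt hd0.le]
    exact Complex.ofReal_natCast d
  have hsd0 : (Real.sqrt d : ℂ) ≠ 0 :=
    Complex.ofReal_ne_zero.mpr (Real.sqrt_ne_zero'.mpr hd0)
  have hζ0 : ζ ≠ 0 := by
    intro h
    rw [h, zero_pow (pow_ne_zero 2 (NeZero.ne d))] at hζd
    exact zero_ne_one hζd
  set G : Matrix (Fin n → ZMod d) (Fin n → ZMod d) ℂ :=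
    Matrix.of fun l m : Fin n → ZMod d =>
        ((Real.sqrt d : ℂ))⁻¹ ^ n * ∏ j, q ^ ((((-(l j)) * (m j)).val : ℕ) : ℤ) with hGdef
  have hGF : G * tensF d n q = 1 := leftinv hq
  have hG : (tensF d n q)⁻¹ = G := Matrix.inv_eq_left_inv hGF
  set v : (Fin n → ZMod d) → ℂ :=
    ζ ^ (-(((∑ j, k j).val ^ 2 : ℕ) : ℤ)) •
          (Real.sqrt d : ℂ)⁻¹ •
            ∑ s : ZMod d,
              q ^ (-((s.val * (∑ j, k j).val : ℕ) : ℤ)) •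
                ket d n (fun j => (∑ i ∈ Finset.Iic j, k i) + s) with hvdef
  have keyvec : (SFT d n q ζ).mulVec (ket d n k) = (tensF d n q).mulVec v := by
    funext l
    have hL : ((SFT d n q ζ).mulVec (ket d n k)) l = SFT d n q ζ l k := by
      simp [Matrix.mulVec, dotProduct, ket, mul_ite, mul_one, mul_zero]
    set c1 : ℤ := (((∑ j, (∑ i ∈ Finset.Iic j, k i) * l j).val : ℕ) : ℤ) with hc1
    set c2 : ℤ := (((∑ p ∈ Finset.univ.filter (fun p : Fin n × Fin n => p.1 < p.2),
        l p.1 * k p.2).val : ℕ) : ℤ) with hc2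
    set a : ℤ := (((∑ j, k j).val ^ 2 : ℕ) : ℤ) with ha
    have htf : ∀ s : ZMod d,
        tensF d n q l (fun j => (∑ i ∈ Finset.Iic j, k i) + s)
          = (Real.sqrt d : ℂ)⁻¹ ^ n *
              (q ^ c1 * q ^ (((s * ∑ j, l j).val : ℕ) : ℤ)) := by
      intro s
      simp only [tensF, Fmat, Matrix.of_apply]
      rw [Finset.prod_mul_distrib, Finset.prod_const, Finset.card_univ, Fintype.card_fin,
        Finset.prod_pow_eq_pow_sum]
      congr 1
      rw [← zpow_natCast q, ← zpow_add₀ hq0]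
      refine qz hq0 hqd ?_
      simp only [hc1]
      push_cast [ZMod.natCast_val, ZMod.cast_id]
      simp_rw [add_mul]
      rw [Finset.sum_add_distrib, ← Finset.mul_sum]
    have hR : ((tensF d n q).mulVec v) l
        = ∑ s : ZMod d,
            tensF d n q l (fun j => (∑ i ∈ Finset.Iic j, k i) + s) *
              (ζ ^ (-a) * ((Real.sqrt d : ℂ)⁻¹ * q ^ (-((s.val * (∑ j, k j).val : ℕ) : ℤ)))) := by
      simp only [Matrix.mulVec, dotProduct, hvdef, Pi.smul_apply, Finset.sum_apply,
        smul_eq_mul, ket, Finset.mul_sum, mul_ite, mul_one, mul_zero]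
      rw [Finset.sum_comm]
      refine Finset.sum_congr rfl fun s _ => ?_
      rw [Finset.sum_ite_eq' Finset.univ (fun j => (∑ i ∈ Finset.Iic j, k i) + s)]
      simp
    have hcomb : ∀ s : ZMod d,
        q ^ (((s * ∑ j, l j).val : ℕ) : ℤ) * q ^ (-((s.val * (∑ j, k j).val : ℕ) : ℤ))
          = q ^ (((s * ((∑ j, l j) - (∑ j, k j))).val : ℕ) : ℤ) := by
      intro s
      rw [← zpow_add₀ hq0]
      refine qz hq0 hqd ?_
      push_cast [ZMod.natCast_val, ZMod.cast_id]
      ring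
    have hR2 : ((tensF d n q).mulVec v) l
        = ζ ^ (-a) * ((Real.sqrt d : ℂ)⁻¹ * ((Real.sqrt d : ℂ)⁻¹ ^ n * q ^ c1)) *
            (if (∑ j, l j) - (∑ j, k j) = 0 then (d : ℂ) else 0) := by
      rw [hR]
      rw [show ∀ r : ℂ, (r = ζ ^ (-a) * ((Real.sqrt d : ℂ)⁻¹ * ((Real.sqrt d : ℂ)⁻¹ ^ n * q ^ c1)) *
            (if (∑ j, l j) - (∑ j, k j) = 0 then (d : ℂ) else 0)) = (r = _) from fun r => rfl]
      calc ∑ s : ZMod d,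
            tensF d n q l (fun j => (∑ i ∈ Finset.Iic j, k i) + s) *
              (ζ ^ (-a) * ((Real.sqrt d : ℂ)⁻¹ * q ^ (-((s.val * (∑ j, k j).val : ℕ) : ℤ))))
          = ζ ^ (-a) * ((Real.sqrt d : ℂ)⁻¹ * ((Real.sqrt d : ℂ)⁻¹ ^ n * q ^ c1)) *
              ∑ s : ZMod d,
                q ^ (((s * ∑ j, l j).val : ℕ) : ℤ) *
                  q ^ (-((s.val * (∑ j, k j).val : ℕ) : ℤ)) := by
            rw [Finset.mul_sum]
            refine Finset.sum_congr rfl fun s _ => ?_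
            rw [htf s]
            ring
        _ = ζ ^ (-a) * ((Real.sqrt d : ℂ)⁻¹ * ((Real.sqrt d : ℂ)⁻¹ ^ n * q ^ c1)) *
              (if (∑ j, l j) - (∑ j, k j) = 0 then (d : ℂ) else 0) := by
            congr 1
            simp_rw [hcomb]
            exact charSum hq _
    rw [hL, hR2]
    simp only [SFT, Matrix.of_apply]
    by_cases h : (∑ j, l j) = (∑ j, k j)
    · rw [if_pos h, if_pos (sub_eq_zero.mpr h)]
      have hprod : (∏ p ∈ Finset.univ.filter (fun p : Fin n × Fin n => p.1 < p.2),
          q ^ (-(((l p.1).val * (k p.2).val : ℕ) : ℤ))) = (q ^ c2)⁻¹ := by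
        simp_rw [zpow_neg, zpow_natCast]
        rw [Finset.prod_inv_distrib, Finset.prod_pow_eq_pow_sum]
        congr 1
        rw [← zpow_natCast q]
        refine qz hq0 hqd ?_
        simp only [hc2]
        push_cast [ZMod.natCast_val, ZMod.cast_id]
        rfl
      have hze : ζ ^ ((∑ j, l j).val ^ 2) = ζ ^ a := by
        rw [h, ha, zpow_natCast]
      have hkey : ζ ^ a * ζ ^ a = q ^ c1 * q ^ c2 := by
        rw [← zpow_add₀ hζ0, show a + a = 2 * a from by ring, zpow_mul,
          show ζ ^ (2:ℤ) = q from by rw [show (2:ℤ) = ((2:ℕ):ℤ) from rfl, zpow_natCast, hζ2], ← zpow_add₀ hq0]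
        refine qz hq0 hqd ?_
        simp only [hc1, hc2, ha]
        push_cast [ZMod.natCast_val, ZMod.cast_id]
        rw [keysum k l, h, sq]
      have hroots : ζ ^ (-a) * q ^ c1 = ζ ^ a * (q ^ c2)⁻¹ := by
        rw [zpow_neg, inv_mul_eq_iff_eq_mul₀ (zpow_ne_zero _ hζ0), ← mul_assoc, hkey,
          mul_assoc, mul_inv_cancel₀ (zpow_ne_zero _ hq0), mul_one]
      have hscal : (Real.sqrt d : ℂ) ^ (1 - (n : ℤ))
          = (Real.sqrt d : ℂ)⁻¹ * (Real.sqrt d : ℂ)⁻¹ ^ n * d := by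
        rw [zpow_sub₀ hsd0, zpow_one, zpow_natCast, ← hsd]
        field_simp
        ring
        rw [← mul_pow, mul_inv_cancel₀ hsd0, one_pow]
      rw [hprod, hze, hscal]
      rw [show ζ ^ (-a) * ((Real.sqrt d : ℂ)⁻¹ * ((Real.sqrt d : ℂ)⁻¹ ^ n * q ^ c1)) * (d:ℂ)
          = (Real.sqrt d : ℂ)⁻¹ * (Real.sqrt d : ℂ)⁻¹ ^ n * (d:ℂ) * (ζ ^ (-a) * q ^ c1) from by
        ring]
      rw [hroots]
      ring
    · rw [if_neg h, if_neg (fun hc => h (sub_eq_zero.mp hc)), mul_zero]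
  rw [hG, ← Matrix.mulVec_mulVec, keyvec, Matrix.mulVec_mulVec, hGF, Matrix.one_mulVec]
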